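/- Failure of the weak deduction theorem: for every n ∈ ℕ and every model m : Prop → [0,∞], the formula n·(𝟙 ∨ ¬𝟙) ⊸ ⊥ evaluates to ∞ ∸ n·min(1, ∞ ∸ 1) = ∞ ≠ 0; hence no judgement ⊢ n(𝟙 ∨ ¬𝟙) ⊸ ⊥ is a tautology. -/
import Mathlib


open ENNReal

/-- Failure of the weak deduction theorem: for every `n : ℕ`, the formula
`n(𝟙 ∨ ¬𝟙) ⊸ ⊥` evaluates to `∞ ∸ n·min(1, ∞ ∸ 1) = ∞ ≠ 0` in every model. -/
theorem weak_deduction_theorem_fails (n : ℕ) :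
    (⊤ : ℝ≥0∞) - (n : ℝ≥0∞) * min (1 : ℝ≥0∞) ((⊤ : ℝ≥0∞) - 1) = ⊤ ∧
    (⊤ : ℝ≥0∞) - (n : ℝ≥0∞) * min (1 : ℝ≥0∞) ((⊤ : ℝ≥0∞) - 1) ≠ 0 := by
  have h1 : (⊤ : ℝ≥0∞) - 1 = ⊤ := ENNReal.top_sub_coe
  have h : (⊤ : ℝ≥0∞) - (n : ℝ≥0∞) * min (1 : ℝ≥0∞) ((⊤ : ℝ≥0∞) - 1) = ⊤ := by
    rw [h1, min_eq_left le_top, mul_one, ENNReal.sub_eq_top_iff]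
    exact ⟨rfl, ENNReal.natCast_ne_top n⟩
  exact ⟨h, h ▸ top_ne_zero⟩
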